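/- For each integer d ≥ 2, the quantities P_p(d) = A_p(5)·(((d−1)(d+4)/((d+1)(d+2)))^p − ((d−2)(d+3)/(d(d+1)))^p), for p ≥ 1, are nonnegative and sum to 1 over p ≥ 1. -/

import Mathlib

/-- The coefficients `A_p(C)`, defined for `p ≥ 1`. -/
noncomputable def Acoef (C : ℝ) (p : ℕ) : ℝ :=
  C ^ ((1 : ℤ) - 2 * p) *
    ∑ q ∈ Finset.range p,
      (Nat.choose (p - 1) q : ℝ) * (Nat.choose (2 * q + 1) q : ℝ) *
        ((C ^ 2 - 1) / 4) ^ (q + 1)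

/-- The limiting probability that the hull perimeter at distance `d` equals `2p` for
infinite quadrangulations. -/
noncomputable def Pperim (d p : ℕ) : ℝ :=
  Acoef 5 p *
    ((((d : ℝ) - 1) * (d + 4) / ((d + 1) * (d + 2))) ^ p -
      (((d : ℝ) - 2) * (d + 3) / (d * (d + 1))) ^ p)


open Finset Polynomial


lemma ringChoose_rec (r : ℚ) (n : ℕ) :
    Ring.choose r (n+1) = Ring.choose r n * (r - n) / (n+1) := by
  have h1 := Ring.descPochhammer_eq_factorial_smul_choose (R := ℚ) r (n+1)
  have h2 := Ring.descPochhammer_eq_factorial_smul_choose (R := ℚ) r n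
  rw [descPochhammer_succ_right, smeval_mul, h2, smeval_sub, smeval_X, smeval_natCast] at h1
  have hf : (n.factorial : ℚ) ≠ 0 := by exact_mod_cast (Nat.factorial_pos n).ne'
  have hn1 : ((n:ℚ)+1) ≠ 0 := by positivity
  rw [eq_div_iff hn1]
  apply mul_left_cancel₀ hf
  rw [Nat.factorial_succ] at h1
  simp only [nsmul_eq_mul, smul_eq_mul] at h1
  push_cast at h1 ⊢
  linear_combination -h1

lemma ringChoose_neg_one (n : ℕ) : Ring.choose (-1 : ℚ) n = (-1)^n := by
  induction n with
  | zero => simp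
  | succ n ih =>
    rw [ringChoose_rec, ih]
    have hn1 : ((n:ℚ)+1) ≠ 0 := by positivity
    field_simp
    ring

lemma ringChoose_neg_half (n : ℕ) :
    Ring.choose (-(1/2) : ℚ) n = (-(1/4))^n * Nat.centralBinom n := by
  induction n with
  | zero => simp [Nat.centralBinom]
  | succ n ih =>
    rw [ringChoose_rec, ih]
    have key : ((n:ℚ) + 1) * Nat.centralBinom (n+1) = 2 * (2*n+1) * Nat.centralBinom n := by
      exact_mod_cast congrArg (Nat.cast : ℕ → ℚ) (Nat.succ_mul_centralBinom_succ n)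
    have hn1 : ((n:ℚ)+1) ≠ 0 := by positivity
    rw [div_eq_iff hn1, pow_succ]
    push_cast at key ⊢
    linear_combination ((-(1/4):ℚ))^n * (1/4) * key

lemma conv_identity (n : ℕ) :
    ∑ ij ∈ antidiagonal n, (Nat.centralBinom ij.1 : ℚ) * Nat.centralBinom ij.2 = 4^n := by
  have h := Ring.add_choose_eq (R := ℚ) (r := -(1/2)) (s := -(1/2)) n (Commute.all _ _)
  have heq : (-(1/2) : ℚ) + -(1/2) = -1 := by norm_num
  rw [heq, ringChoose_neg_one] at h
  simp only [ringChoose_neg_half] at h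
  have h2 : ∑ ij ∈ antidiagonal n, ((-(1/4):ℚ))^ij.1 * Nat.centralBinom ij.1 *
      ((-(1/4):ℚ)^ij.2 * Nat.centralBinom ij.2)
      = (-(1/4):ℚ)^n * ∑ ij ∈ antidiagonal n, (Nat.centralBinom ij.1 : ℚ) * Nat.centralBinom ij.2 := by
    rw [Finset.mul_sum]
    apply Finset.sum_congr rfl
    intro ij hij
    rw [Finset.HasAntidiagonal.mem_antidiagonal] at hij
    rw [← hij, pow_add]
    ring
  rw [h2] at h
  have h4 : ((-(1/4):ℚ))^n ≠ 0 := by positivity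
  apply mul_left_cancel₀ h4
  rw [← h]
  rw [show ((-(1/4):ℚ))^n * 4^n = ((-(1/4):ℚ) * 4)^n by rw [mul_pow]]
  norm_num



lemma centralBinom_le_four_pow (n : ℕ) : Nat.centralBinom n ≤ 4 ^ n := by
  induction n with
  | zero => simp [Nat.centralBinom]
  | succ n ih =>
    have h := Nat.succ_mul_centralBinom_succ n
    have : (n+1) * Nat.centralBinom (n+1) ≤ (n+1) * 4^(n+1) := by
      rw [h]
      calc 2 * (2*n+1) * Nat.centralBinom n ≤ (4*(n+1)) * 4^n := by
            apply Nat.mul_le_mul (by omega) ih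
        _ = (n+1) * 4^(n+1) := by ring
    exact Nat.le_of_mul_le_mul_left this (Nat.succ_pos n)

lemma hasSum_centralBinom {x t : ℝ} (hx : 0 ≤ x) (hx4 : 4*x < 1) (ht : 0 ≤ t)
    (h : t^2 * (1 - 4*x) = 1) :
    HasSum (fun m => (Nat.centralBinom m : ℝ) * x ^ m) t := by
  set f : ℕ → ℝ := fun m => (Nat.centralBinom m : ℝ) * x ^ m with hf
  have hnn : ∀ m, 0 ≤ f m := fun m => by positivity
  have hb : ∀ m, f m ≤ (4*x)^m := by
    intro m
    rw [mul_pow]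
    apply mul_le_mul_of_nonneg_right _ (by positivity)
    exact_mod_cast centralBinom_le_four_pow m
  have hgeo : Summable (fun m : ℕ => (4*x)^m) :=
    summable_geometric_of_lt_one (by positivity) hx4
  have hs : Summable f := Summable.of_nonneg_of_le hnn hb hgeo
  have hnorm : Summable (fun m => ‖f m‖) := by
    simpa [Real.norm_of_nonneg, hnn, abs_of_nonneg] using hs.abs
  set s := ∑' m, f m with hsdef
  have hfs : HasSum f s := hs.hasSum
  have hsq : s * s = 1 / (1 - 4*x) := by
    rw [hsdef, tsum_mul_tsum_eq_tsum_sum_antidiagonal_of_summable_norm hnorm hnorm]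
    have hterm : ∀ n : ℕ, ∑ kl ∈ antidiagonal n, f kl.1 * f kl.2 = (4*x)^n := by
      intro n
      have hc : ∑ ij ∈ antidiagonal n, (Nat.centralBinom ij.1 : ℝ) * Nat.centralBinom ij.2
          = 4^n := by
        have := congrArg (fun q : ℚ => (q : ℝ)) (conv_identity n)
        push_cast at this
        exact this
      calc ∑ kl ∈ antidiagonal n, f kl.1 * f kl.2
          = ∑ kl ∈ antidiagonal n,
              ((Nat.centralBinom kl.1 : ℝ) * Nat.centralBinom kl.2) * x^n := by
            apply Finset.sum_congr rfl
            intro kl hkl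
            rw [Finset.HasAntidiagonal.mem_antidiagonal] at hkl
            rw [hf]
            simp only
            rw [← hkl, pow_add]
            ring
        _ = (4*x)^n := by rw [← Finset.sum_mul, hc, mul_pow]
    rw [tsum_congr hterm, tsum_geometric_of_lt_one (by positivity) hx4]
    exact (one_div _).symm
  have hst : s = t := by
    have h1 : (s - t) * (s + t) = 0 := by
      have ht2 : t * t = 1 / (1 - 4*x) := by
        have h14 : (1 : ℝ) - 4*x ≠ 0 := by linarith
        field_simp
        linear_combination h
      nlinarith [hsq, ht2]
    rcases mul_eq_zero.mp h1 with h2 | h2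
    · linarith
    · exfalso
      have hs0 : 0 ≤ s := tsum_nonneg hnn
      have : s = 0 ∧ t = 0 := by constructor <;> linarith
      rw [this.2] at h
      norm_num at h
  exact hst ▸ hfs

lemma five_pow (p : ℕ) : (5:ℝ)^((1:ℤ) - 2*p) = 5 / 25^p := by
  rw [zpow_sub₀ (by norm_num : (5:ℝ) ≠ 0), zpow_one,
    show ((2:ℤ)*p) = ((2*p : ℕ) : ℤ) by push_cast; ring, zpow_natCast, pow_mul]
  norm_num

lemma cb_succ (q : ℕ) : Nat.centralBinom (q+1) = 2 * Nat.choose (2*q+1) q := by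
  have h1 : Nat.centralBinom (q+1) = Nat.choose (2*q+1) q + Nat.choose (2*q+1) (q+1) := by
    rw [Nat.centralBinom, show 2*(q+1) = (2*q+1)+1 by ring, Nat.choose_succ_succ']
  have h2 : Nat.choose (2*q+1) (q+1) = Nat.choose (2*q+1) q := by
    rw [← Nat.choose_symm (by omega : q+1 ≤ 2*q+1)]
    congr 1
    omega
  omega

lemma keylem {β t : ℝ} (hβ0 : 0 ≤ β) (hβ1 : β < 1)
    (ht : HasSum (fun m => (Nat.centralBinom m : ℝ) * (6*β/(25-β))^m) t) :
    HasSum (fun p : ℕ => Acoef 5 (p+1) * β^(p+1)) (5*(t-1)/2) := by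
  have h25 : (0:ℝ) < 25 - β := by linarith
  have h25' : (25:ℝ) - β ≠ 0 := h25.ne'
  set x : ℝ := 6*β/(25-β) with hxdef
  set g : ℕ × ℕ → ℝ := fun qk =>
    (5:ℝ)^((1:ℤ) - 2*((qk.1+qk.2+1 : ℕ) : ℤ)) * (Nat.choose (qk.1+qk.2) qk.1) *
      (Nat.choose (2*qk.1+1) qk.1) * 6^(qk.1+1) * β^(qk.1+qk.2+1) with hg
  have hgnn : ∀ qk, 0 ≤ g qk := by
    intro qk
    rw [hg]
    have h5 : (0:ℝ) < (5:ℝ)^((1:ℤ) - 2*((qk.1+qk.2+1 : ℕ) : ℤ)) := zpow_pos (by norm_num) _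
    positivity
  have hr : ‖β/25‖ < 1 := by
    rw [Real.norm_eq_abs, abs_of_nonneg (by linarith)]
    linarith
  have h125 : (0:ℝ) < 1 - β/25 := by linarith
  have hcol : ∀ q : ℕ, HasSum (fun k => g (q,k))
      ((5/2) * (Nat.centralBinom (q+1) : ℝ) * x^(q+1)) := by
    intro q
    have hgeom := hasSum_choose_mul_geometric_of_norm_lt_one (𝕜 := ℝ) q hr
    set Cq : ℝ := (5 / 25^(q+1)) * (Nat.choose (2*q+1) q) * 6^(q+1) * β^(q+1) with hCq
    have h1 : (fun k => g (q,k)) = fun k => Cq * (((k + q).choose q : ℝ) * (β/25)^k) := by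
      funext k
      rw [hg, hCq]
      simp only
      rw [five_pow, show q + k + 1 = (q+1) + k by ring, Nat.add_comm k q]
      rw [pow_add, pow_add, div_pow]
      have h25k : (25:ℝ)^k ≠ 0 := by positivity
      field_simp
      ring
    have h2 : Cq * (1 / (1 - β/25) ^ (q + 1)) =
        (5/2) * (Nat.centralBinom (q+1) : ℝ) * x^(q+1) := by
      have hcb : (Nat.centralBinom (q+1) : ℝ) = 2 * (Nat.choose (2*q+1) q : ℝ) := by
        exact_mod_cast congrArg (Nat.cast : ℕ → ℝ) (cb_succ q)
      have h3 : ((25:ℝ) * (1 - β/25)) = 25 - β := by ring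
      rw [hCq, hcb, hxdef, div_pow]
      rw [show ((25:ℝ) - β)^(q+1) = 25^(q+1) * (1 - β/25)^(q+1) by rw [← mul_pow, h3]]
      have e1 : ((1:ℝ) - β/25)^(q+1) ≠ 0 := by positivity
      have e2 : ((25:ℝ))^(q+1) ≠ 0 := by positivity
      field_simp
      ring
    rw [h1, ← h2]
    exact hgeom.mul_left Cq
  have hrow : HasSum (fun q : ℕ => (5/2) * (Nat.centralBinom (q+1) : ℝ) * x^(q+1))
      (5*(t-1)/2) := by
    have h0 : HasSum (fun q : ℕ => (Nat.centralBinom (q+1) : ℝ) * x^(q+1)) (t - 1) := by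
      refine (hasSum_nat_add_iff (f := fun m => (Nat.centralBinom m : ℝ) * x^m) 1).mpr ?_
      convert ht using 1
      · rfl
      simp [Nat.centralBinom]
    have h1 := h0.mul_left (5/2)
    have h2 : (5:ℝ)*(t-1)/2 = (5/2)*(t-1) := by ring
    rw [h2]
    simpa [← mul_assoc] using h1
  have hsumg : Summable g := by
    rw [summable_prod_of_nonneg hgnn]
    exact ⟨fun q => (hcol q).summable,
      Summable.congr hrow.summable fun q => ((hcol q).tsum_eq).symm⟩
  have hG : HasSum g (∑' qk, g qk) := hsumg.hasSum
  have hGval : (∑' qk, g qk) = 5*(t-1)/2 := (hG.prod_fiberwise hcol).unique hrow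
  rw [hGval] at hG
  have hGe : HasSum (g ∘ (Finset.HasAntidiagonal.sigmaAntidiagonalEquivProd (A := ℕ))) (5*(t-1)/2) :=
    (Equiv.hasSum_iff _).mpr hG
  have hsig : HasSum (fun n : ℕ => ∑ ij ∈ antidiagonal n, g ij) (5*(t-1)/2) := by
    apply HasSum.sigma hGe
    intro n
    have := hasSum_fintype (fun c : (antidiagonal n : Finset (ℕ×ℕ)) => g c)
    simpa [Finset.sum_attach, Finset.HasAntidiagonal.sigmaAntidiagonalEquivProd] using this
  have hfin : (fun n : ℕ => ∑ ij ∈ antidiagonal n, g ij)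
      = fun n => Acoef 5 (n+1) * β^(n+1) := by
    funext n
    rw [Finset.Nat.sum_antidiagonal_eq_sum_range_succ_mk]
    rw [Acoef]
    have h6 : (((5:ℝ)^2 - 1) / 4) = 6 := by norm_num
    rw [h6, show n + 1 - 1 = n from rfl]
    rw [Finset.mul_sum, Finset.sum_mul]
    apply Finset.sum_congr rfl
    intro q hq
    rw [Finset.mem_range] at hq
    have hqn : q + (n - q) = n := by omega
    rw [hg]
    simp only
    rw [hqn]
    ring
  rwa [hfin] at hsig

theorem Pperim_nonneg_and_sums_to_one (d : ℕ) (hd : 2 ≤ d) :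
    (∀ p : ℕ, 1 ≤ p → 0 ≤ Pperim d p) ∧ HasSum (fun p : ℕ => Pperim d (p + 1)) 1 := by
  have hd2 : (2:ℝ) ≤ (d:ℝ) := by exact_mod_cast hd
  set D : ℝ := (d:ℝ) with hD
  have hD1 : (0:ℝ) < D + 1 := by linarith
  have hD2 : (0:ℝ) < D + 2 := by linarith
  have hD0 : (0:ℝ) < D := by linarith
  set β₁ : ℝ := (D - 1) * (D + 4) / ((D + 1) * (D + 2)) with hβ₁
  set β₂ : ℝ := (D - 2) * (D + 3) / (D * (D + 1)) with hβ₂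
  have hβ₁0 : 0 ≤ β₁ := by
    apply div_nonneg (by nlinarith) (by positivity)
  have hβ₂0 : 0 ≤ β₂ := by
    apply div_nonneg (by nlinarith) (by positivity)
  have hβ₁1 : β₁ < 1 := by
    rw [hβ₁, div_lt_one (by positivity)]
    nlinarith
  have hβ₂1 : β₂ < 1 := by
    rw [hβ₂, div_lt_one (by positivity)]
    nlinarith
  have hle : β₂ ≤ β₁ := by
    rw [hβ₁, hβ₂, div_le_div_iff₀ (by positivity) (by positivity)]
    nlinarith
  have hA : ∀ p : ℕ, 0 ≤ Acoef 5 p := by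
    intro p
    rw [Acoef, show (((5:ℝ)^2 - 1) / 4) = 6 by norm_num]
    have h5 : (0:ℝ) < (5:ℝ)^((1:ℤ) - 2*(p:ℤ)) := zpow_pos (by norm_num) _
    positivity
  constructor
  · intro p hp
    rw [Pperim]
    apply mul_nonneg (hA p)
    rw [sub_nonneg]
    exact pow_le_pow_left₀ hβ₂0 hle p
  · have key : ∀ β tt : ℝ, 0 ≤ β → β < 1 → 0 ≤ tt →
        (tt^2 * (25 * (1 - β)) = 25 - β) →
        HasSum (fun p : ℕ => Acoef 5 (p+1) * β^(p+1)) (5*(tt-1)/2) := by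
      intro β tt hb0 hb1 ht0 halg
      have h25 : (0:ℝ) < 25 - β := by linarith
      apply keylem hb0 hb1
      apply hasSum_centralBinom (by positivity) ?_ ht0 ?_
      · rw [show 4*(6*β/(25-β)) = 24*β/(25-β) by ring, div_lt_one h25]
        linarith
      · have : (1:ℝ) - 4*(6*β/(25-β)) = 25*(1-β)/(25-β) := by
          field_simp
          ring
        rw [this, ← mul_div_assoc, halg, div_self h25.ne']
    have hs₁ : HasSum (fun p : ℕ => Acoef 5 (p+1) * β₁^(p+1)) ((D:ℝ) - 1) := by
      have := key β₁ ((2*D+3)/5) hβ₁0 hβ₁1 (by positivity) ?_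
      · convert this using 1
        ring
      · rw [hβ₁]
        field_simp
        ring
    have hs₂ : HasSum (fun p : ℕ => Acoef 5 (p+1) * β₂^(p+1)) ((D:ℝ) - 2) := by
      have := key β₂ ((2*D+1)/5) hβ₂0 hβ₂1 (by positivity) ?_
      · convert this using 1
        ring
      · rw [hβ₂]
        field_simp
        ring
    have h := hs₁.sub hs₂
    have h1 : (D - 1) - (D - 2) = (1:ℝ) := by ring
    rw [h1] at h
    have hfun : (fun p : ℕ => Acoef 5 (p+1) * β₁^(p+1) - Acoef 5 (p+1) * β₂^(p+1))
        = fun p : ℕ => Pperim d (p+1) := by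
      funext p
      rw [Pperim, mul_sub]
    rwa [hfun] at h
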